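/- Fix an integer n ≥ 1, a real number P ∈ (0,1), and a real number c > 0, and set D = 1 − (c/n)·ln(1−P) (note D > 0). Let γ : ℕ → ℝ be a sequence with γ_m > 0 for all m and γ_m/m → c as m → ∞. Then lim_{m→∞} S(m, γ_m, P) = (1−P)^{(n−1)/n} · e^{1/c} · Σ_{k=0}^{n−1} ((−1)^k/(k!·c^k)) · D^{−(n−k)}. -/

import Mathlib

open Filter

/-- The function `S(m,γ,P)` of Appendix D of the paper. -/
noncomputable def rocS (n m : ℕ) (γ P : ℝ) : ℝ :=
  (n.factorial : ℝ) * (1 + 1 / γ) ^ (m - n) *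
    ∑ k ∈ Finset.range n, ∑ ℓ ∈ Finset.range (n - k),
      ((-1 : ℝ) ^ k * (m + k - 1).factorial /
          ((m - 1).factorial * k.factorial * (n - 1 - k - ℓ).factorial *
            (k + ℓ + 1).factorial * γ ^ (n - ℓ - 1))) *
        (1 - P) ^ (((m : ℝ) * ((n : ℝ) - 1) + ℓ + 1) / ((m : ℝ) * n)) /
        (1 + γ * (1 - (1 - P) ^ (1 / ((m : ℝ) * (n : ℝ))))) ^ (ℓ + 1)

private lemma fact_prod_aux (m k : ℕ) (hm : 1 ≤ m) :
    (m + k - 1).factorial = (m - 1).factorial * ∏ i ∈ Finset.range k, (m + i) := by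
  induction k with
  | zero => simp
  | succ k ih =>
      have h : m + (k + 1) - 1 = (m + k - 1) + 1 := by omega
      have h2 : m + k - 1 + 1 = m + k := by omega
      rw [h, Nat.factorial_succ, ih, Finset.prod_range_succ, h2]; ring

/-- The limit of a single `(k,ℓ)` summand (without the `n!(1+1/γ)^{m-n}` prefactor). -/
noncomputable def rocTval (n k ℓ : ℕ) (c P D : ℝ) : ℝ :=
  (-1 : ℝ) ^ k / ((k.factorial : ℝ) * ((n - 1 - k - ℓ).factorial : ℝ) *
      ((k + ℓ + 1).factorial : ℝ)) *
    (c⁻¹ ^ k * (0:ℝ) ^ (n - 1 - k - ℓ)) * (1 - P) ^ (((n:ℝ) - 1) / n) * (D ^ (ℓ + 1))⁻¹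

private lemma term_tendsto (n : ℕ) (hn : 1 ≤ n) (P : ℝ) (hP1 : P < 1)
    (c : ℝ) (D : ℝ) (hDpos : 0 < D)
    (γ : ℕ → ℝ) (hγpos : ∀ m, 0 < γ m)
    (hγtop : Tendsto γ atTop atTop)
    (hmγ : Tendsto (fun m : ℕ => (m:ℝ) / γ m) atTop (nhds c⁻¹))
    (hden : Tendsto (fun m : ℕ => 1 + γ m * (1 - (1 - P) ^ (1 / ((m:ℝ)*(n:ℝ))))) atTop (nhds D))
    (k ℓ : ℕ) (hk : k < n) (hℓ : ℓ < n - k) :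
    Tendsto (fun m : ℕ =>
      ((-1 : ℝ) ^ k * ((m + k - 1).factorial : ℝ) /
          (((m - 1).factorial : ℝ) * (k.factorial : ℝ) * ((n - 1 - k - ℓ).factorial : ℝ) *
            ((k + ℓ + 1).factorial : ℝ) * γ m ^ (n - ℓ - 1))) *
        (1 - P) ^ (((m : ℝ) * ((n : ℝ) - 1) + ℓ + 1) / ((m : ℝ) * n)) /
        (1 + γ m * (1 - (1 - P) ^ (1 / ((m : ℝ) * (n : ℝ))))) ^ (ℓ + 1)) atTop
      (nhds (rocTval n k ℓ c P D)) := by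
  have h1P : (0:ℝ) < 1 - P := by linarith
  have hn0 : (0:ℝ) < n := by exact_mod_cast hn
  set t := Real.log (1 - P) with ht
  set d := n - 1 - k - ℓ with hdd
  have hγinv : Tendsto (fun m : ℕ => (γ m)⁻¹) atTop (nhds 0) := hγtop.inv_tendsto_atTop
  have hprod : Tendsto (fun m : ℕ => ∏ i ∈ Finset.range k, (((m:ℝ) + i) / γ m)) atTop
      (nhds (c⁻¹ ^ k)) := by
    have h := tendsto_finset_prod (M := ℝ) (α := ℕ) (x := atTop)
      (f := fun (i : ℕ) (m : ℕ) => ((m:ℝ) + i) / γ m) (a := fun _ => c⁻¹) (Finset.range k) ?_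
    · simpa using h
    intro i _
    have h1 : Tendsto (fun m : ℕ => (m:ℝ)/γ m + (i:ℝ) * (γ m)⁻¹) atTop
        (nhds (c⁻¹ + (i:ℝ) * 0)) := hmγ.add (tendsto_const_nhds.mul hγinv)
    have h2 : ∀ m : ℕ, (m:ℝ)/γ m + (i:ℝ) * (γ m)⁻¹ = ((m:ℝ) + i) / γ m := fun m => by
      have hγne : γ m ≠ 0 := (hγpos m).ne'
      field_simp
    simpa using h1.congr h2
  have hpow0 : Tendsto (fun m : ℕ => (γ m)⁻¹ ^ d) atTop (nhds ((0:ℝ) ^ d)) := hγinv.pow d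
  have hrp : Tendsto (fun m : ℕ => (1 - P) ^ (((m : ℝ) * ((n : ℝ) - 1) + ℓ + 1) / ((m : ℝ) * n)))
      atTop (nhds ((1 - P) ^ (((n:ℝ) - 1) / n))) := by
    have hee : Tendsto (fun m : ℕ => ((m:ℝ)*((n:ℝ)-1)+ℓ+1)/((m:ℝ)*n)) atTop
        (nhds (((n:ℝ)-1)/n)) := by
      have h1 : Tendsto (fun m : ℕ => ((n:ℝ)-1)/n + ((ℓ:ℝ)+1)/((m:ℝ)*n)) atTop
          (nhds (((n:ℝ)-1)/n + 0)) :=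
        tendsto_const_nhds.add (tendsto_const_nhds.div_atTop
          (tendsto_natCast_atTop_atTop.atTop_mul_const hn0))
      have h2 : Tendsto (fun m : ℕ => ((n:ℝ)-1)/n + ((ℓ:ℝ)+1)/((m:ℝ)*n)) atTop
          (nhds (((n:ℝ)-1)/n)) := by simpa using h1
      refine h2.congr' ?_
      filter_upwards [eventually_ge_atTop 1] with m hm
      have hmne : (m:ℝ) ≠ 0 := Nat.cast_ne_zero.mpr (by omega)
      have hnne : (n:ℝ) ≠ 0 := hn0.ne'
      field_simp
      ring
    have hcont : Tendsto (fun m : ℕ => Real.exp (t * (((m:ℝ)*((n:ℝ)-1)+ℓ+1)/((m:ℝ)*n))))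
        atTop (nhds (Real.exp (t * (((n:ℝ)-1)/n)))) :=
      (Real.continuous_exp.tendsto _).comp (tendsto_const_nhds.mul hee)
    have hre : ∀ x : ℝ, (1 - P) ^ x = Real.exp (t * x) := fun x =>
      Real.rpow_def_of_pos h1P x
    simp only [hre]
    exact hcont
  have hdeninv : Tendsto (fun m : ℕ =>
      (((1 + γ m * (1 - (1 - P) ^ (1 / ((m : ℝ) * (n : ℝ))))) ^ (ℓ + 1))⁻¹)) atTop
      (nhds ((D ^ (ℓ + 1))⁻¹)) :=
    (hden.pow (ℓ+1)).inv₀ (pow_ne_zero _ hDpos.ne')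
  have hcomb :
    Tendsto (fun m : ℕ =>
      (-1 : ℝ) ^ k / ((k.factorial : ℝ) * ((n - 1 - k - ℓ).factorial : ℝ) *
          ((k + ℓ + 1).factorial : ℝ)) *
        ((∏ i ∈ Finset.range k, (((m:ℝ) + i) / γ m)) * (γ m)⁻¹ ^ d) *
        (1 - P) ^ (((m : ℝ) * ((n : ℝ) - 1) + ℓ + 1) / ((m : ℝ) * n)) *
        ((1 + γ m * (1 - (1 - P) ^ (1 / ((m : ℝ) * (n : ℝ))))) ^ (ℓ + 1))⁻¹) atTop
      (nhds ((-1 : ℝ) ^ k / ((k.factorial : ℝ) * ((n - 1 - k - ℓ).factorial : ℝ) *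
          ((k + ℓ + 1).factorial : ℝ)) * (c⁻¹ ^ k * (0:ℝ) ^ d) *
        (1 - P) ^ (((n:ℝ) - 1) / n) * (D ^ (ℓ + 1))⁻¹)) :=
    (((tendsto_const_nhds.mul (hprod.mul hpow0))).mul hrp).mul hdeninv
  rw [rocTval]
  refine hcomb.congr' ?_
  filter_upwards [eventually_ge_atTop 1] with m hm
  have hγne : γ m ≠ 0 := (hγpos m).ne'
  have hfp : ((m + k - 1).factorial : ℝ)
      = ((m - 1).factorial : ℝ) * ∏ i ∈ Finset.range k, ((m:ℝ) + i) := by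
    rw [fact_prod_aux m k hm]
    push_cast
    ring
  have hsplit : γ m ^ (n - ℓ - 1) = γ m ^ k * γ m ^ d := by
    rw [← pow_add]
    congr 1
    omega
  have hmfne : ((m - 1).factorial : ℝ) ≠ 0 := Nat.cast_ne_zero.mpr (Nat.factorial_ne_zero _)
  have hkfne : ((k).factorial : ℝ) ≠ 0 := Nat.cast_ne_zero.mpr (Nat.factorial_ne_zero _)
  have hdfne : ((n - 1 - k - ℓ).factorial : ℝ) ≠ 0 := Nat.cast_ne_zero.mpr (Nat.factorial_ne_zero _)
  have hkℓfne : ((k + ℓ + 1).factorial : ℝ) ≠ 0 := Nat.cast_ne_zero.mpr (Nat.factorial_ne_zero _)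
  rw [Finset.prod_div_distrib, Finset.prod_const, Finset.card_range, hfp, hsplit,
    div_eq_mul_inv _ ((1 + γ m * (1 - (1 - P) ^ (1 / ((m : ℝ) * (n : ℝ))))) ^ (ℓ + 1))]
  congr 1
  field_simp
  ring_nf
  rw [← hdd, ← mul_pow, mul_inv_cancel₀ hγne, one_pow, one_mul]



/-- Limit (Slimit) of Appendix D: as `m → ∞` with `γ_m/m → c > 0`,
`S(m,γ_m,P) → (1−P)^{(n−1)/n}·e^{1/c}·Σ_{k=0}^{n−1} ((−1)^k/(k!c^k))·D^{−(n−k)}`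
where `D = 1 − (c/n)·ln(1−P)`. -/
theorem S_limit (n : ℕ) (hn : 1 ≤ n) (P : ℝ) (hP : P ∈ Set.Ioo (0 : ℝ) 1)
    (c : ℝ) (hc : 0 < c) (D : ℝ) (hD : D = 1 - c / n * Real.log (1 - P))
    (γ : ℕ → ℝ) (hγpos : ∀ m, 0 < γ m)
    (hγ : Tendsto (fun m : ℕ => γ m / m) atTop (nhds c)) :
    Tendsto (fun m : ℕ => rocS n m (γ m) P) atTop
      (nhds ((1 - P) ^ (((n : ℝ) - 1) / n) * Real.exp (1 / c) *
        ∑ k ∈ Finset.range n, ((-1 : ℝ) ^ k / (k.factorial * c ^ k)) * (D ^ (n - k))⁻¹)) := by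
  obtain ⟨hP0, hP1⟩ := hP
  have h1P : (0:ℝ) < 1 - P := by linarith
  have hn0 : (0:ℝ) < n := by exact_mod_cast hn
  set t := Real.log (1 - P) with ht
  have htneg : t < 0 := Real.log_neg h1P (by linarith)
  have hDpos : 0 < D := by
    have h1 : 0 < -(c / n * t) := by
      have : 0 < c / n := div_pos hc hn0
      nlinarith
    rw [hD]; linarith
  -- basic limits
  have hγtop : Tendsto γ atTop atTop := by
    have h1 : Tendsto (fun m : ℕ => (γ m / m) * m) atTop atTop :=
      hγ.pos_mul_atTop hc tendsto_natCast_atTop_atTop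
    refine h1.congr' ?_
    filter_upwards [eventually_gt_atTop 0] with m hm
    have : (m:ℝ) ≠ 0 := Nat.cast_ne_zero.mpr hm.ne'
    rw [div_mul_cancel₀ _ this]
  have hmγ : Tendsto (fun m : ℕ => (m:ℝ) / γ m) atTop (nhds c⁻¹) := by
    simpa [inv_div] using hγ.inv₀ hc.ne'
  -- the prefactor limit
  have hA : Tendsto (fun m : ℕ => (1 + 1 / γ m) ^ (m - n)) atTop (nhds (Real.exp c⁻¹)) := by
    have hlog1 : Tendsto (fun m : ℕ => γ m * Real.log (1 + 1 / γ m)) atTop (nhds 1) := by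
      exact (Real.tendsto_mul_log_one_add_div_atTop 1).comp hγtop
    have ha : Tendsto (fun m : ℕ => (n:ℝ)/m) atTop (nhds 0) :=
      tendsto_const_nhds.div_atTop tendsto_natCast_atTop_atTop
    have hb : Tendsto (fun m : ℕ => 1 - (n:ℝ)/m) atTop (nhds (1 - 0)) :=
      tendsto_const_nhds.sub ha
    have hcℓ : Tendsto (fun m : ℕ => (m:ℝ)/γ m * (γ m * Real.log (1 + 1/γ m)))
        atTop (nhds (c⁻¹ * 1)) := hmγ.mul hlog1
    have hinner : Tendsto (fun m : ℕ => ((m - n : ℕ):ℝ) * Real.log (1 + 1 / γ m)) atTop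
        (nhds c⁻¹) := by
      have h3 : Tendsto (fun m : ℕ => ((m - n : ℕ):ℝ) * Real.log (1 + 1 / γ m)) atTop
          (nhds ((1 - 0) * (c⁻¹ * 1))) := by
        refine (hb.mul hcℓ).congr' ?_
        filter_upwards [eventually_ge_atTop (max n 1)] with m hm
        have hmn : n ≤ m := le_trans (le_max_left _ _) hm
        have hmne : (m:ℝ) ≠ 0 := Nat.cast_ne_zero.mpr (by omega)
        have hγne : γ m ≠ 0 := (hγpos m).ne'
        rw [Nat.cast_sub hmn]
        field_simp
      simpa using h3
    have heq : ∀ m : ℕ, Real.exp (((m - n : ℕ):ℝ) * Real.log (1 + 1 / γ m))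
        = (1 + 1 / γ m) ^ (m - n) := by
      intro m
      have hg := hγpos m
      have hb : (0:ℝ) < 1 + 1 / γ m := by positivity
      rw [Real.exp_nat_mul, Real.exp_log hb]
    exact ((Real.continuous_exp.tendsto _).comp hinner).congr heq
  -- the denominator limit
  have hden : Tendsto (fun m : ℕ => 1 + γ m * (1 - (1 - P) ^ (1 / ((m:ℝ)*(n:ℝ))))) atTop
      (nhds D) := by
    have hrpow_exp : ∀ m : ℕ, (1 - P) ^ (1 / ((m:ℝ)*(n:ℝ))) = Real.exp (t / ((m:ℝ)*n)) := by
      intro m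
      rw [Real.rpow_def_of_pos h1P, ← ht, mul_one_div]
    have hmn_top : Tendsto (fun m : ℕ => (m:ℝ) * n) atTop atTop :=
      tendsto_natCast_atTop_atTop.atTop_mul_const hn0
    have hs0 : Tendsto (fun m : ℕ => t / ((m:ℝ)*n)) atTop (nhds 0) :=
      tendsto_const_nhds.div_atTop hmn_top
    have hslope : Tendsto (fun s : ℝ => (Real.exp s - 1)/s) (nhdsWithin 0 {0}ᶜ) (nhds 1) := by
      have h := Real.hasDerivAt_exp 0
      rw [hasDerivAt_iff_tendsto_slope] at h
      rw [Real.exp_zero] at h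
      refine h.congr fun s => ?_
      simp [slope_def_field, Real.exp_zero]
    have hsne : Tendsto (fun m : ℕ => t/((m:ℝ)*n)) atTop (nhdsWithin 0 {0}ᶜ) := by
      rw [tendsto_nhdsWithin_iff]
      refine ⟨hs0, ?_⟩
      filter_upwards [eventually_ge_atTop 1] with m hm
      have hmne : (m:ℝ)*n ≠ 0 := by
        have : (0:ℝ) < m := by exact_mod_cast Nat.lt_of_lt_of_le Nat.zero_lt_one hm
        positivity
      simp only [Set.mem_compl_iff, Set.mem_singleton_iff]
      exact div_ne_zero htneg.ne hmne
    have hE : Tendsto (fun m : ℕ => γ m * (1 - Real.exp (t/((m:ℝ)*n)))) atTop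
        (nhds (-(c * (t/n) * 1))) := by
      have h1 : Tendsto (fun m : ℕ =>
          -(γ m / m * (t/n) * ((Real.exp (t/((m:ℝ)*n)) - 1)/(t/((m:ℝ)*n)))))
          atTop (nhds (-(c * (t/n) * 1))) := ((hγ.mul_const (t/n)).mul (hslope.comp hsne)).neg
      refine h1.congr' ?_
      filter_upwards [eventually_ge_atTop 1] with m hm
      have hmne : (m:ℝ) ≠ 0 := Nat.cast_ne_zero.mpr (by omega)
      have hnne : (n:ℝ) ≠ 0 := hn0.ne'
      have htne : t ≠ 0 := htneg.ne
      field_simp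
      ring
    have hfin : Tendsto (fun m : ℕ => 1 + γ m * (1 - Real.exp (t/((m:ℝ)*n)))) atTop
        (nhds (1 + -(c * (t/n) * 1))) := tendsto_const_nhds.add hE
    have hval : (1:ℝ) + -(c * (t/n) * 1) = D := by rw [hD]; ring
    rw [hval] at hfin
    refine hfin.congr fun m => ?_
    rw [hrpow_exp m]
  -- sum of the limits
  have hsum : Tendsto (fun m : ℕ =>
      ∑ k ∈ Finset.range n, ∑ ℓ ∈ Finset.range (n - k),
        ((-1 : ℝ) ^ k * ((m + k - 1).factorial : ℝ) /
            (((m - 1).factorial : ℝ) * (k.factorial : ℝ) * ((n - 1 - k - ℓ).factorial : ℝ) *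
              ((k + ℓ + 1).factorial : ℝ) * γ m ^ (n - ℓ - 1))) *
          (1 - P) ^ (((m : ℝ) * ((n : ℝ) - 1) + ℓ + 1) / ((m : ℝ) * n)) /
          (1 + γ m * (1 - (1 - P) ^ (1 / ((m : ℝ) * (n : ℝ))))) ^ (ℓ + 1)) atTop
      (nhds (∑ k ∈ Finset.range n, ∑ ℓ ∈ Finset.range (n - k), rocTval n k ℓ c P D)) := by
    refine tendsto_finset_sum _ fun k hk => tendsto_finset_sum _ fun ℓ hℓ => ?_
    exact term_tendsto n hn P hP1 c D hDpos γ hγpos hγtop hmγ hden k ℓ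
      (Finset.mem_range.mp hk) (Finset.mem_range.mp hℓ)
  have hmain : Tendsto (fun m : ℕ => rocS n m (γ m) P) atTop
      (nhds ((n.factorial : ℝ) * Real.exp c⁻¹ *
        ∑ k ∈ Finset.range n, ∑ ℓ ∈ Finset.range (n - k), rocTval n k ℓ c P D)) := by
    have := (tendsto_const_nhds (x := (n.factorial : ℝ)).mul hA).mul hsum
    exact this.congr fun m => by rw [rocS]
  -- identify the limit value
  convert hmain using 2
  -- evaluate the inner sums
  have hinner_sum : ∀ k ∈ Finset.range n,
      ∑ ℓ ∈ Finset.range (n - k), rocTval n k ℓ c P D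
        = (-1 : ℝ) ^ k / ((k.factorial : ℝ) * (n.factorial : ℝ)) * c⁻¹ ^ k *
            (1 - P) ^ (((n:ℝ) - 1) / n) * (D ^ (n - k))⁻¹ := by
    intro k hk
    have hkn : k < n := Finset.mem_range.mp hk
    rw [Finset.sum_eq_single_of_mem (n - 1 - k) (Finset.mem_range.mpr (by omega))]
    · rw [rocTval]
      have e1 : n - 1 - k - (n - 1 - k) = 0 := by omega
      have e2 : k + (n - 1 - k) + 1 = n := by omega
      have e3 : n - 1 - k + 1 = n - k := by omega
      rw [e1, e2, e3]
      norm_num [Nat.factorial]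
    · intro b hb hbne
      have hb' : b < n - k := Finset.mem_range.mp hb
      have : n - 1 - k - b ≠ 0 := by omega
      rw [rocTval]
      rw [zero_pow this]
      ring
  rw [Finset.sum_congr rfl hinner_sum, Finset.mul_sum, Finset.mul_sum]
  refine Finset.sum_congr rfl fun k hk => ?_
  have hkfne : ((k).factorial : ℝ) ≠ 0 := Nat.cast_ne_zero.mpr (Nat.factorial_ne_zero _)
  have hnfne : ((n).factorial : ℝ) ≠ 0 := Nat.cast_ne_zero.mpr (Nat.factorial_ne_zero _)
  have hcne : c ≠ 0 := hc.ne'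
  have hDne : (D : ℝ) ^ (n - k) ≠ 0 := pow_ne_zero _ hDpos.ne'
  rw [one_div]
  field_simp
  ring_nf
  rw [← mul_pow, mul_inv_cancel₀ hcne, one_pow]
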